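/- Let $p > 1$ and let $k \in \mathbb{N}$ be such that $k < p \le k+1$. Then for all real numbers $a \ge b \ge 0$, one has $(a-b)^p \ge a^p - b^p - \sum_{j=1}^{k} \binom{p}{j} b^{p-j} (a-b)^j$, where $\binom{p}{j} = \frac{p(p-1)\cdots(p-j+1)}{j!}$ is the generalized binomial coefficient. -/

import Mathlib

open Real Finset

noncomputable def genBinom (p : ℝ) (j : ℕ) : ℝ :=
  (∏ i ∈ Finset.range j, (p - i)) / (Nat.factorial j)

lemma genBinom_zero (p : ℝ) : genBinom p 0 = 1 := by simp [genBinom]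

lemma genBinom_succ_mul (p : ℝ) (i : ℕ) :
    ((i : ℝ) + 1) * genBinom p (i + 1) = p * genBinom (p - 1) i := by
  have h1 : ∏ t ∈ Finset.range (i + 1), (p - t) = (∏ t ∈ Finset.range i, (p - 1 - t)) * p := by
    rw [Finset.prod_range_succ']
    simp only [Nat.cast_zero, sub_zero]
    congr 1
    apply Finset.prod_congr rfl
    intro t _
    push_cast
    ring
  have h2 : (Nat.factorial (i + 1) : ℝ) = ((i : ℝ) + 1) * Nat.factorial i := by
    rw [Nat.factorial_succ]; push_cast; ring
  have hfi : (Nat.factorial i : ℝ) ≠ 0 := by positivity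
  have hfi1 : (i : ℝ) + 1 ≠ 0 := by positivity
  rw [genBinom, genBinom, h1, h2]
  field_simp

lemma key : ∀ k : ℕ, ∀ p : ℝ, (k : ℝ) < p → p ≤ k + 1 → ∀ b x : ℝ, 0 ≤ b → 0 ≤ x →
    (b + x) ^ p ≤ b ^ p + x ^ p +
      ∑ j ∈ Finset.Icc 1 k, genBinom p j * b ^ (p - j) * x ^ (j : ℕ) := by
  intro k
  induction k with
  | zero =>
    intro p hp0 hp1 b x hb hx
    simp only [Nat.cast_zero, zero_add] at hp0 hp1 ⊢
    simp only [Finset.Icc_self, Finset.Icc_eq_empty_of_lt (by norm_num : (1:ℕ) > 0)]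
    have := NNReal.rpow_add_le_add_rpow ⟨b, hb⟩ ⟨x, hx⟩ hp0.le hp1
    have h2 := NNReal.coe_le_coe.2 this
    push_cast [NNReal.coe_rpow] at h2
    have h3 : (b + x) ^ p ≤ b ^ p + x ^ p := h2
    simpa using h3
  | succ k ih =>
    intro p hp0 hp1 b x hb hx
    have hk1 : ((k : ℝ) + 1) < p := by push_cast at hp0; linarith
    have hknn : (0:ℝ) ≤ (k:ℝ) := Nat.cast_nonneg k
    have hp_pos : (0 : ℝ) < p := by linarith
    set f : ℝ → ℝ := fun y => b ^ p + y ^ p +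
      (∑ j ∈ Finset.Icc 1 (k+1), genBinom p j * b ^ (p - j) * y ^ (j : ℕ)) - (b + y) ^ p
      with hf
    -- derivative
    have hderiv : ∀ y : ℝ, 0 < y → HasDerivAt f
        (p * y ^ (p-1) + (∑ j ∈ Finset.Icc 1 (k+1),
          genBinom p j * b ^ (p - j) * ((j : ℝ) * y ^ (j - 1))) - p * (b + y) ^ (p-1) * 1) y := by
      intro y hy
      have h1 : HasDerivAt (fun y : ℝ => y ^ p) (p * y ^ (p-1)) y :=
        Real.hasDerivAt_rpow_const (Or.inl hy.ne')
      have hby : (0:ℝ) < b + y := by linarith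
      have h2 : HasDerivAt (fun y : ℝ => (b + y) ^ p) (p * (b + y) ^ (p-1) * 1) y :=
        (Real.hasDerivAt_rpow_const (Or.inl hby.ne')).comp y
          ((hasDerivAt_id y).const_add b)
      have h3 : HasDerivAt (fun y : ℝ => ∑ j ∈ Finset.Icc 1 (k+1),
          genBinom p j * b ^ (p - j) * y ^ (j : ℕ))
          (∑ j ∈ Finset.Icc 1 (k+1), genBinom p j * b ^ (p - j) * ((j : ℝ) * y ^ (j - 1))) y :=
        HasDerivAt.fun_sum (fun j _ => (hasDerivAt_pow j y).const_mul _)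
      exact ((h1.const_add (b ^ p)).add h3).sub h2
    -- derivative nonneg
    have hderiv_nonneg : ∀ y : ℝ, 0 < y →
        0 ≤ p * y ^ (p-1) + (∑ j ∈ Finset.Icc 1 (k+1),
          genBinom p j * b ^ (p - j) * ((j : ℝ) * y ^ (j - 1))) - p * (b + y) ^ (p-1) * 1 := by
      intro y hy
      have hsum : (∑ j ∈ Finset.Icc 1 (k+1), genBinom p j * b ^ (p - j) * ((j : ℝ) * y ^ (j - 1)))
          = p * b ^ (p-1) + p * ∑ j ∈ Finset.Icc 1 k,
              genBinom (p-1) j * b ^ ((p-1) - j) * y ^ (j : ℕ) := by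
        rw [← Finset.Ico_add_one_right_eq_Icc, Finset.sum_Ico_eq_sum_range]
        simp only [Nat.succ_sub_one, Nat.add_sub_cancel]
        have hterm : ∀ i : ℕ, genBinom p (1+i) * b ^ (p - (1+i : ℕ)) * (((1+i : ℕ) : ℝ) * y ^ ((1+i) - 1))
            = p * (genBinom (p-1) i * b ^ ((p-1) - i) * y ^ i) := by
          intro i
          have h := genBinom_succ_mul p i
          have h1 : (1+i : ℕ) - 1 = i := by omega
          have h2 : (1+i : ℕ) = i + 1 := by omega
          have he : p - ((1+i : ℕ) : ℝ) = (p-1) - i := by push_cast; ring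
          rw [h1, he, h2]
          push_cast
          linear_combination (b ^ ((p-1) - (i:ℝ)) * y ^ i) * h
        have hre : ∑ j ∈ Finset.Icc 1 k, genBinom (p-1) j * b ^ ((p-1) - (j:ℝ)) * y ^ (j:ℕ)
            = ∑ i ∈ Finset.range k, genBinom (p-1) (i+1) * b ^ ((p-1) - ((i+1 : ℕ):ℝ)) * y ^ (i+1) := by
          rw [← Finset.Ico_add_one_right_eq_Icc, Finset.sum_Ico_eq_sum_range]
          simp only [Nat.add_sub_cancel]
          exact Finset.sum_congr rfl (fun i _ => by rw [Nat.add_comm 1 i])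
        rw [Finset.sum_congr rfl fun i _ => hterm i, ← Finset.mul_sum,
          Finset.sum_range_succ', genBinom_zero, hre]
        simp only [Nat.cast_zero, sub_zero, pow_zero, one_mul, mul_one]
        ring
      have hIH := ih (p-1) (by linarith) (by push_cast at hp1 ⊢; linarith) b y hb hy.le
      rw [hsum]
      nlinarith [mul_le_mul_of_nonneg_left hIH hp_pos.le]
    -- continuity
    have hcont : ContinuousOn f (Set.Ici 0) := by
      apply ContinuousOn.sub
      · apply ContinuousOn.add
        · apply ContinuousOn.add continuousOn_const
          exact fun y _ => (Real.continuousAt_rpow_const y p (Or.inr hp_pos.le)).continuousWithinAt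
        · exact (continuous_finset_sum _ fun j _ => by fun_prop).continuousOn
      · intro y _
        exact ((Real.continuousAt_rpow_const (b + y) p (Or.inr hp_pos.le)).comp
          (by fun_prop)).continuousWithinAt
    have hmono : MonotoneOn f (Set.Ici 0) := by
      apply monotoneOn_of_deriv_nonneg (convex_Ici 0) hcont
      · intro y hy
        rw [interior_Ici] at hy
        exact (hderiv y hy).differentiableAt.differentiableWithinAt
      · intro y hy
        rw [interior_Ici] at hy
        rw [(hderiv y hy).deriv]
        exact hderiv_nonneg y hy
    have hf0 : f 0 = 0 := by
      simp only [hf]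
      rw [Real.zero_rpow hp_pos.ne', add_zero]
      rw [Finset.sum_eq_zero (fun j hj => by
        have : 1 ≤ j := (Finset.mem_Icc.mp hj).1
        rw [zero_pow (by omega), mul_zero])]
      ring
    have := hmono (Set.self_mem_Ici) (Set.mem_Ici.2 hx) hx
    rw [hf0] at this
    simp only [hf] at this
    linarith

theorem stmt0 (p : ℝ) (k : ℕ) (hp : 1 < p) (hk1 : (k : ℝ) < p) (hk2 : p ≤ k + 1)
    (a b : ℝ) (hb : 0 ≤ b) (hab : b ≤ a) :
    (a - b) ^ p ≥ a ^ p - b ^ p -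
      ∑ j ∈ Finset.Icc 1 k, genBinom p j * b ^ (p - j) * (a - b) ^ (j : ℕ) := by
  have hx : 0 ≤ a - b := by linarith
  have h := key k p hk1 hk2 b (a - b) hb hx
  have : b + (a - b) = a := by ring
  rw [this] at h
  linarith
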